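/- Let X be a real d×d matrix with ‖X‖ < 2π, where matrices carry a norm making them a Banach algebra (e.g. the L² operator norm). Then the series γ_u(X) := ∑_{k=0}^∞ (B'_k / k!)·X^k and γ_u(−X) := ∑_{k=0}^∞ (B'_k / k!)·(−X)^k are summable, and γ_u(X) = exp(X) · γ_u(−X), where exp is the matrix exponential. -/

import Mathlib

open scoped Matrix

attribute [local instance] Matrix.linftyOpNormedRing Matrix.linftyOpNormedAlgebra

section GammaAux

open Finset Real

lemma key_q (n : ℕ) : ∑ k ∈ range (n+1), (n.choose k : ℚ) * bernoulli k = bernoulli' n := by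
  rw [Finset.sum_range_succ, sum_bernoulli, Nat.choose_self]
  by_cases h : n = 1
  · subst h; norm_num [bernoulli_one, bernoulli'_one]
  · rw [if_neg h, bernoulli_eq_bernoulli'_of_ne_one h]; ring

lemma coeff_key_q (n : ℕ) :
    ∑ k ∈ range (n+1), (1 / (k.factorial : ℚ)) * (bernoulli (n - k) / ((n - k).factorial : ℚ)) =
      bernoulli' n / (n.factorial : ℚ) := by
  rw [eq_div_iff (by exact_mod_cast (Nat.factorial_ne_zero n)), Finset.sum_mul, ← key_q n]
  rw [← Finset.sum_range_reflect (fun k => (n.choose k : ℚ) * bernoulli k) (n+1)]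
  refine Finset.sum_congr rfl fun k hk => ?_
  have hk' : k ≤ n := Nat.lt_succ_iff.mp (Finset.mem_range.mp hk)
  have h1 : n + 1 - 1 - k = n - k := by omega
  rw [h1, Nat.cast_choose ℚ (Nat.sub_le n k)]
  have h2 : n - (n - k) = k := by omega
  rw [h2]
  have hkf : (k.factorial : ℚ) ≠ 0 := by exact_mod_cast (Nat.factorial_ne_zero k)
  have hnkf : ((n - k).factorial : ℚ) ≠ 0 := by exact_mod_cast (Nat.factorial_ne_zero (n-k))
  field_simp

lemma zeta_val_le {m : ℕ} (hm : m ≠ 0) :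
    (2 : ℝ) ^ (2 * m - 1) * π ^ (2 * m) * |(bernoulli (2 * m) : ℝ)| / ((2 * m).factorial : ℝ) ≤ π ^ 2 / 6 := by
  have h := hasSum_zeta_nat hm
  have h2 := hasSum_zeta_two
  have hle : ((-1 : ℝ) ^ (m + 1) * (2 : ℝ) ^ (2 * m - 1) * π ^ (2 * m) *
      bernoulli (2 * m) / ((2 * m).factorial : ℝ)) ≤ π ^ 2 / 6 := by
    refine hasSum_le (fun n => ?_) h h2
    rcases Nat.eq_zero_or_pos n with rfl | hn
    · simp [Nat.mul_ne_zero two_ne_zero hm]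
    · have h1 : (1 : ℝ) ≤ (n : ℝ) := by exact_mod_cast hn
      have : (n : ℝ) ^ 2 ≤ (n : ℝ) ^ (2 * m) := by
        apply pow_le_pow_right₀ h1; omega
      apply div_le_div_of_nonneg_left one_pos.le (by positivity) this
  have hpos : (0 : ℝ) ≤ ((-1 : ℝ) ^ (m + 1) * (2 : ℝ) ^ (2 * m - 1) * π ^ (2 * m) *
      bernoulli (2 * m) / ((2 * m).factorial : ℝ)) := h.nonneg (fun n => by positivity)
  calc (2 : ℝ) ^ (2 * m - 1) * π ^ (2 * m) * |(bernoulli (2 * m) : ℝ)| / ((2 * m).factorial : ℝ)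
      = |((-1 : ℝ) ^ (m + 1) * (2 : ℝ) ^ (2 * m - 1) * π ^ (2 * m) *
        bernoulli (2 * m) / ((2 * m).factorial : ℝ))| := by
        rw [abs_div, abs_mul, abs_mul, abs_mul, abs_pow, abs_neg, abs_one, one_pow, one_mul,
          abs_pow, abs_pow, abs_of_nonneg (two_pos.le : (0:ℝ) ≤ 2), abs_of_nonneg pi_pos.le,
          abs_of_nonneg (by positivity : (0:ℝ) ≤ ((2*m).factorial : ℝ))]
    _ = _ := abs_of_nonneg hpos
    _ ≤ π ^ 2 / 6 := hle

lemma bern_bound (k : ℕ) :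
    |(bernoulli' k : ℝ)| / (k.factorial : ℝ) ≤ 4 / (2 * π) ^ k := by
  have hpi : (0:ℝ) < π := pi_pos
  match k with
  | 0 => norm_num
  | 1 =>
    rw [bernoulli'_one]
    rw [div_le_div_iff₀ (by norm_num) (by positivity)]
    push_cast
    rw [pow_one]
    rw [abs_of_nonneg (by norm_num : (0:ℝ) ≤ (1:ℝ)/2)]
    simp [Nat.factorial]; nlinarith [pi_lt_d2, pi_pos]
  | (k + 2) =>
    rcases Nat.even_or_odd (k + 2) with ⟨m, hm⟩ | hodd
    · -- even case, k + 2 = 2 * m, m ≥ 1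
      have hm1 : m ≠ 0 := by omega
      have hmm : k + 2 = 2 * m := by omega
      rw [hmm, ← bernoulli_eq_bernoulli'_of_ne_one (by omega)]
      have hz := zeta_val_le hm1
      have hfac : (0:ℝ) < ((2*m).factorial : ℝ) := by positivity
      have hpow : (2 * π) ^ (2 * m) = 2 * ((2:ℝ) ^ (2*m-1) * π ^ (2*m)) := by
        rw [mul_pow]
        have : (2:ℝ) ^ (2*m) = 2 * 2 ^ (2*m-1) := by
          rw [← pow_succ']
          congr 1
          omega
        rw [this]; ring
      rw [div_le_div_iff₀ hfac (by positivity), hpow]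
      have h2 : (2:ℝ) ^ (2*m-1) * π ^ (2*m) * |(bernoulli (2*m) : ℝ)| ≤ π^2/6 * ((2*m).factorial : ℝ) := by
        rw [div_le_iff₀ hfac] at hz
        linarith
      have hpisq : π^2/6 ≤ 2 := by nlinarith [pi_lt_d2, pi_pos]
      nlinarith [abs_nonneg ((bernoulli (2*m) : ℝ)), pow_pos (mul_pos two_pos hpi) (2*m),
        pow_pos (two_pos : (0:ℝ)<2) (2*m-1), pow_pos hpi (2*m)]
    · rw [bernoulli'_eq_zero_of_odd hodd (by omega)]
      simp
      positivity

end GammaAux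

/-- The universal matrix `γ_u(X) := ∑_{k=0}^∞ (B'_k/k!)·X^k`, with `B'_k` the Bernoulli
numbers with convention `B'_1 = +1/2`. -/
noncomputable def gammaU {d : ℕ} (X : Matrix (Fin d) (Fin d) ℝ) : Matrix (Fin d) (Fin d) ℝ :=
  ∑' k : ℕ, ((bernoulli' k : ℝ) / (Nat.factorial k : ℝ)) • X ^ k

open Finset Real in
private lemma gamma_summable_norm (X : Matrix (Fin d) (Fin d) ℝ) (hX : ‖X‖ < 2 * Real.pi) :
    Summable (fun k : ℕ => ‖((bernoulli' k : ℝ) / (Nat.factorial k : ℝ)) • X ^ k‖) := by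
  have hpi : (0:ℝ) < 2 * Real.pi := by positivity
  set r : ℝ := ‖X‖ / (2 * Real.pi) with hr
  have hr0 : 0 ≤ r := by positivity
  have hr1 : r < 1 := (div_lt_one hpi).mpr hX
  set C : ℝ := max 1 ‖(1 : Matrix (Fin d) (Fin d) ℝ)‖ with hC
  have hsum : Summable (fun k : ℕ => 4 * C * r ^ k) :=
    (summable_geometric_of_lt_one hr0 hr1).mul_left _
  refine Summable.of_nonneg_of_le (fun k => norm_nonneg _) (fun k => ?_) hsum
  rw [norm_smul]
  have hb := bern_bound k
  have hXk : ‖X ^ k‖ ≤ C * ‖X‖ ^ k := by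
    cases k with
    | zero =>
      rw [pow_zero, pow_zero, mul_one]
      exact le_max_right 1 ‖(1 : Matrix (Fin d) (Fin d) ℝ)‖
    | succ n =>
      calc ‖X ^ (n+1)‖ ≤ ‖X‖ ^ (n+1) := norm_pow_le' X n.succ_pos
        _ ≤ C * ‖X‖ ^ (n+1) := by
            nlinarith [le_max_left 1 ‖(1 : Matrix (Fin d) (Fin d) ℝ)‖,
              pow_nonneg (norm_nonneg X) (n+1)]
  have h1 : ‖(bernoulli' k : ℝ) / (Nat.factorial k : ℝ)‖ ≤ 4 / (2 * Real.pi) ^ k := by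
    rw [Real.norm_eq_abs, abs_div, abs_of_nonneg (by positivity : (0:ℝ) ≤ (Nat.factorial k : ℝ))]
    exact hb
  calc ‖(bernoulli' k : ℝ) / (Nat.factorial k : ℝ)‖ * ‖X ^ k‖
      ≤ (4 / (2 * Real.pi) ^ k) * (C * ‖X‖ ^ k) := by
        apply mul_le_mul h1 hXk (norm_nonneg _) (by positivity)
    _ = 4 * C * r ^ k := by
        rw [hr, div_pow]
        field_simp

open Finset Real in
/-- For `‖X‖ < 2π` the series defining `γ_u(X)` and `γ_u(−X)` are summable, and
`γ_u(X) = exp(X) · γ_u(−X)`. -/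
theorem gammaU_eq_exp_mul_gammaU_neg {d : ℕ} (X : Matrix (Fin d) (Fin d) ℝ)
    (hX : ‖X‖ < 2 * Real.pi) :
    Summable (fun k : ℕ => ((bernoulli' k : ℝ) / (Nat.factorial k : ℝ)) • X ^ k) ∧
    Summable (fun k : ℕ => ((bernoulli' k : ℝ) / (Nat.factorial k : ℝ)) • (-X) ^ k) ∧
    gammaU X = NormedSpace.exp X * gammaU (-X) := by
  have hXn : ‖(-X)‖ < 2 * Real.pi := by rwa [norm_neg]
  have hg : Summable (fun k : ℕ => ‖((bernoulli' k : ℝ) / (Nat.factorial k : ℝ)) • (-X) ^ k‖) :=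
    gamma_summable_norm (-X) hXn
  have hgX : Summable (fun k : ℕ => ‖((bernoulli' k : ℝ) / (Nat.factorial k : ℝ)) • X ^ k‖) :=
    gamma_summable_norm X hX
  refine ⟨hgX.of_norm, hg.of_norm, ?_⟩
  have hf : Summable (fun n : ℕ => ‖((Nat.factorial n : ℝ)⁻¹) • X ^ n‖) :=
    NormedSpace.norm_expSeries_summable' (𝕂 := ℝ) X
  simp only [NormedSpace.exp_eq_tsum ℝ]
  unfold gammaU
  erw [tsum_mul_tsum_eq_tsum_sum_antidiagonal_of_summable_norm hf hg]
  refine (tsum_congr fun n => ?_).symm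
  have hterm : ∀ kl ∈ antidiagonal n,
      (((Nat.factorial kl.1 : ℝ)⁻¹) • X ^ kl.1) *
        (((bernoulli' kl.2 : ℝ) / (Nat.factorial kl.2 : ℝ)) • (-X) ^ kl.2) =
      ((Nat.factorial kl.1 : ℝ)⁻¹ * ((bernoulli kl.2 : ℝ) / (Nat.factorial kl.2 : ℝ))) • X ^ n := by
    intro kl hkl
    have hn : kl.1 + kl.2 = n := Finset.HasAntidiagonal.mem_antidiagonal.mp hkl
    have hneg : (-X) ^ kl.2 = ((-1 : ℝ) ^ kl.2) • X ^ kl.2 := by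
      rw [← smul_pow, neg_one_smul]
    rw [hneg, smul_smul, smul_mul_smul_comm, ← pow_add, hn]
    congr 1
    have hb : (bernoulli' kl.2 : ℝ) = (-1 : ℝ) ^ kl.2 * (bernoulli kl.2 : ℝ) := by
      have := bernoulli'_eq_bernoulli kl.2
      push_cast [this]
      norm_num
    rw [hb]
    rcases Nat.even_or_odd kl.2 with h | h
    · rw [h.neg_one_pow]; ring
    · rw [h.neg_one_pow]; ring
  rw [Finset.sum_congr rfl hterm, ← Finset.sum_smul,
    Finset.Nat.sum_antidiagonal_eq_sum_range_succ_mk]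
  congr 1
  have := coeff_key_q n
  have hcast : ∑ k ∈ range (n+1),
      ((Nat.factorial k : ℝ)⁻¹ * ((bernoulli (n - k) : ℝ) / (Nat.factorial (n - k) : ℝ))) =
      ((∑ k ∈ range (n+1), (1 / (k.factorial : ℚ)) * (bernoulli (n - k) / ((n - k).factorial : ℚ)) : ℚ) : ℝ) := by
    push_cast
    refine Finset.sum_congr rfl fun k _ => ?_
    rw [one_div]
  rw [hcast, this]
  push_cast
  ring
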